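/- Let H be a real Hilbert space, let R₀ > 0 and κ ≥ 0, let θ : ℝ → ℝ be a continuously differentiable function with 0 ≤ θ(x) ≤ 1 for all x, θ(x) = 1 for x ≤ 2, θ(x) = 0 for x ≥ 4, and |θ'(x)| ≤ 2 for all x, and let E : H → H be a continuously Fréchet differentiable map with ‖E(v)‖ ≤ κ and ‖DE(v)‖ ≤ κ for all v with ‖v‖ ≤ 2R₀. Define Ẽ : H → H by Ẽ(v) = θ(‖v‖²/R₀²)·E(v). Then: Ẽ is continuously Fréchet differentiable on all of H; Ẽ(v) = E(v) whenever ‖v‖ ≤ √2·R₀; ‖Ẽ(v)‖ ≤ κ for all v ∈ H; and ‖DẼ(v)‖ ≤ (1 + 8/R₀)·κ for all v ∈ H. -/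

import Mathlib

set_option synthInstance.maxHeartbeats 1000000
set_option maxHeartbeats 1000000

/-- Truncating a `C¹` perturbation error `E` by the radial cutoff
`θ(‖v‖²/R₀²)` produces a globally `C¹` map `Ẽ(v) = θ(‖v‖²/R₀²)·E(v)` which agrees with
`E` on the ball of radius `√2·R₀`, satisfies `‖Ẽ(v)‖ ≤ κ` everywhere, and
`‖DẼ(v)‖ ≤ (1 + 8/R₀)·κ` everywhere. -/
theorem truncated_perturbation_C1_close
    {H : Type*} [NormedAddCommGroup H] [InnerProductSpace ℝ H] [CompleteSpace H]
    (R₀ κ : ℝ) (hR₀ : 0 < R₀) (hκ : 0 ≤ κ)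
    (θ : ℝ → ℝ) (hθC1 : ContDiff ℝ 1 θ)
    (hθ01 : ∀ x : ℝ, 0 ≤ θ x ∧ θ x ≤ 1)
    (hθ1 : ∀ x : ℝ, x ≤ 2 → θ x = 1)
    (hθ0 : ∀ x : ℝ, 4 ≤ x → θ x = 0)
    (hθ' : ∀ x : ℝ, |deriv θ x| ≤ 2)
    (E : H → H) (hEC1 : ContDiff ℝ 1 E)
    (hE : ∀ v : H, ‖v‖ ≤ 2 * R₀ → ‖E v‖ ≤ κ)
    (hDE : ∀ v : H, ‖v‖ ≤ 2 * R₀ → ‖fderiv ℝ E v‖ ≤ κ)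
    (Et : H → H) (hEt : ∀ v : H, Et v = θ (‖v‖ ^ 2 / R₀ ^ 2) • E v) :
    ContDiff ℝ 1 Et ∧
    (∀ v : H, ‖v‖ ≤ Real.sqrt 2 * R₀ → Et v = E v) ∧
    (∀ v : H, ‖Et v‖ ≤ κ) ∧
    (∀ v : H, ‖fderiv ℝ Et v‖ ≤ (1 + 8 / R₀) * κ) := by
  have hEt' : Et = fun v : H => θ (‖v‖ ^ 2 / R₀ ^ 2) • E v := funext hEt
  have hR2 : (0:ℝ) < R₀ ^ 2 := pow_pos hR₀ 2
  -- θ vanishes outside the ball of radius 2R₀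
  have key : ∀ v : H, 2 * R₀ < ‖v‖ → θ (‖v‖ ^ 2 / R₀ ^ 2) = 0 := by
    intro v h
    refine hθ0 _ ?_
    rw [le_div_iff₀ hR2]
    nlinarith [norm_nonneg v]
  -- C¹ smoothness
  have hC1 : ContDiff ℝ 1 Et := by
    rw [hEt']
    exact (hθC1.comp ((contDiff_norm_sq ℝ).div_const _)).smul hEC1
  -- derivative formula
  have hs : ∀ v : H, HasFDerivAt (fun w : H => ‖w‖ ^ 2 / R₀ ^ 2)
      ((R₀ ^ 2)⁻¹ • ((2:ℝ) • (innerSL ℝ v))) v := by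
    intro v
    have h1 : HasFDerivAt (fun w : H => ‖w‖ ^ 2) ((2:ℝ) • (innerSL ℝ v)) v := by
      have := (hasStrictFDerivAt_norm_sq v).hasFDerivAt
      rwa [← Nat.cast_smul_eq_nsmul ℝ 2] at this
    have := h1.const_smul ((R₀ ^ 2)⁻¹)
    exact this.congr_of_eventuallyEq (Filter.Eventually.of_forall fun w => by simp [div_eq_inv_mul, smul_eq_mul])
  have hEtd : ∀ v : H, HasFDerivAt Et
      (θ (‖v‖ ^ 2 / R₀ ^ 2) • fderiv ℝ E v +
        (deriv θ (‖v‖ ^ 2 / R₀ ^ 2) • ((R₀ ^ 2)⁻¹ • ((2:ℝ) • (innerSL ℝ v)))).smulRight (E v))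
      v := by
    intro v
    rw [hEt']
    have hθd : HasDerivAt θ (deriv θ (‖v‖ ^ 2 / R₀ ^ 2)) (‖v‖ ^ 2 / R₀ ^ 2) :=
      ((hθC1.differentiable one_ne_zero) _).hasDerivAt
    have hφ := hθd.comp_hasFDerivAt v (hs v)
    exact hφ.smul (hEC1.differentiable one_ne_zero v).hasFDerivAt
  refine ⟨hC1, ?_, ?_, ?_⟩
  · -- agreement on the ball of radius √2 R₀
    intro v hv
    have h2 : ‖v‖ ^ 2 ≤ 2 * R₀ ^ 2 := by
      have := pow_le_pow_left₀ (norm_nonneg v) hv 2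
      have hs2 : (Real.sqrt 2 * R₀) ^ 2 = 2 * R₀ ^ 2 := by
        rw [mul_pow, Real.sq_sqrt (by norm_num : (0:ℝ) ≤ 2)]
      linarith [this, hs2 ▸ this]
    rw [hEt, hθ1 _ (by rw [div_le_iff₀ hR2]; linarith), one_smul]
  · -- global bound on Et
    intro v
    rw [hEt, norm_smul]
    by_cases hv : ‖v‖ ≤ 2 * R₀
    · calc ‖θ (‖v‖ ^ 2 / R₀ ^ 2)‖ * ‖E v‖ ≤ 1 * κ := by
            apply mul_le_mul _ (hE v hv) (norm_nonneg _) zero_le_one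
            rw [Real.norm_eq_abs, abs_le]
            exact ⟨by linarith [(hθ01 (‖v‖ ^ 2 / R₀ ^ 2)).1], (hθ01 _).2⟩
        _ = κ := one_mul κ
    · rw [key v (not_le.mp hv)]
      simpa using hκ
  · -- global bound on the derivative
    intro v
    by_cases hv : ‖v‖ ≤ 2 * R₀
    · rw [(hEtd v).fderiv]
      have hθb : ‖θ (‖v‖ ^ 2 / R₀ ^ 2)‖ ≤ 1 := by
        rw [Real.norm_eq_abs, abs_le]
        exact ⟨by linarith [(hθ01 (‖v‖ ^ 2 / R₀ ^ 2)).1], (hθ01 _).2⟩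
      have hDs : ‖deriv θ (‖v‖ ^ 2 / R₀ ^ 2) • ((R₀ ^ 2)⁻¹ • ((2:ℝ) • (innerSL ℝ v)))‖
          ≤ 8 / R₀ := by
        have e1 : ‖deriv θ (‖v‖ ^ 2 / R₀ ^ 2) • ((R₀ ^ 2)⁻¹ • ((2:ℝ) • (innerSL ℝ v)))‖
            = ‖deriv θ (‖v‖ ^ 2 / R₀ ^ 2)‖ * ‖(R₀ ^ 2)⁻¹ • ((2:ℝ) • (innerSL ℝ v))‖ :=
          norm_smul (β := H →L[ℝ] ℝ) _ _
        have e2 : ‖(R₀ ^ 2)⁻¹ • ((2:ℝ) • (innerSL ℝ v))‖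
            = ‖(R₀ ^ 2)⁻¹‖ * ‖(2:ℝ) • (innerSL ℝ v)‖ := norm_smul (β := H →L[ℝ] ℝ) _ _
        have e3 : ‖(2:ℝ) • (innerSL ℝ v)‖ = ‖(2:ℝ)‖ * ‖innerSL ℝ v‖ :=
          norm_smul (β := H →L[ℝ] ℝ) _ _
        rw [e1, e2, e3, innerSL_apply_norm]
        have h1 : ‖deriv θ (‖v‖ ^ 2 / R₀ ^ 2)‖ ≤ 2 := hθ' _
        have h2 : ‖(R₀ ^ 2)⁻¹‖ = (R₀ ^ 2)⁻¹ := by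
          rw [Real.norm_eq_abs, abs_of_pos (inv_pos.mpr hR2)]
        rw [h2]
        have h3 : ‖(2:ℝ)‖ = 2 := by norm_num
        rw [h3]
        have hA : (R₀ ^ 2)⁻¹ * (2 * ‖v‖) ≤ (R₀ ^ 2)⁻¹ * (2 * (2 * R₀)) := by gcongr
        calc ‖deriv θ (‖v‖ ^ 2 / R₀ ^ 2)‖ * ((R₀ ^ 2)⁻¹ * (2 * ‖v‖))
            ≤ 2 * ((R₀ ^ 2)⁻¹ * (2 * (2 * R₀))) :=
              mul_le_mul h1 hA (by positivity) (by norm_num)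
          _ = 8 / R₀ := by field_simp; ring
      calc ‖θ (‖v‖ ^ 2 / R₀ ^ 2) • fderiv ℝ E v +
              (deriv θ (‖v‖ ^ 2 / R₀ ^ 2) • ((R₀ ^ 2)⁻¹ • ((2:ℝ) • (innerSL ℝ v)))).smulRight
                (E v)‖
          ≤ ‖θ (‖v‖ ^ 2 / R₀ ^ 2) • fderiv ℝ E v‖ +
              ‖(deriv θ (‖v‖ ^ 2 / R₀ ^ 2) • ((R₀ ^ 2)⁻¹ • ((2:ℝ) • (innerSL ℝ v)))).smulRight
                (E v)‖ := norm_add_le _ _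
        _ ≤ 1 * κ + (8 / R₀) * κ := by
            apply add_le_add
            · rw [norm_smul]
              exact mul_le_mul hθb (hDE v hv) (norm_nonneg _) zero_le_one
            · rw [ContinuousLinearMap.norm_smulRight_apply]
              exact mul_le_mul hDs (hE v hv) (norm_nonneg _)
                (div_nonneg (by norm_num) hR₀.le)
        _ = (1 + 8 / R₀) * κ := by ring
    · have hvlt : 2 * R₀ < ‖v‖ := not_le.mp hv
      have hU : IsOpen {w : H | 2 * R₀ < ‖w‖} := isOpen_lt continuous_const continuous_norm
      have hEq : Et =ᶠ[nhds v] fun _ => (0:H) := by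
        filter_upwards [hU.mem_nhds hvlt] with w hw
        rw [hEt w, key w hw, zero_smul]
      rw [hEq.fderiv_eq, fderiv_const_apply, norm_zero]
      exact mul_nonneg (by positivity) hκ
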